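/- Let B_n = Σ_{k=0}^{n} C_3(n+k−3, k) (subtraction truncated at 0) be the number of n-tile tilings of a board using unit squares and (1,2)-fences. Then for every n ≥ 2, B_n = 2·B_{n−1} − B_{n−2} + 3·B_{n−3} − 2·B_{n−4}, with the convention B_i = 0 for i < 0; equivalently, B_n + B_{n−2} + 2·B_{n−4} = 2·B_{n−1} + 3·B_{n−3}. -/

import Mathlib

/-- `Cm m N k` is the number of `k`-element subsets of `{1, …, N}` in which
no two elements differ by exactly `m`. -/
def Cm (m N k : ℕ) : ℕ :=
  (((Finset.Icc 1 N).powersetCard k).filter (fun S => ∀ a ∈ S, a + m ∉ S)).card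

/-- `B3 i` is the number of `i`-tile tilings of a board using unit squares and
`(1,2)`-fences (the row sums of the `m = 3` `n`-tile tiling triangle), with
`B3 i = 0` for `i < 0`. -/
def B3 (i : ℤ) : ℤ :=
  if i < 0 then 0
  else ∑ k ∈ Finset.range (i.toNat + 1), (Cm 3 (i.toNat + k - 3) k : ℤ)

def Wf : ℕ → ℕ → Bool → Bool → Bool → ℕ
  | 0, k, a, b, c => if k = 0 ∧ a = false ∧ b = false ∧ c = false then 1 else 0
  | N+1, k, a, b, false => Wf N k true a b + Wf N k false a b
  | _+1, 0, _, _, true => 0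
  | N+1, k+1, a, b, true => Wf N k false a b

lemma wf_false_eq (N k : ℕ) (a b : Bool) :
    Wf (N+1) k a b false = Wf N k true a b + Wf N k false a b := by cases k <;> rfl

def WZ (N : ℕ) (k : ℤ) (a b c : Bool) : ℤ := if 0 ≤ k then (Wf N k.toNat a b c : ℤ) else 0

lemma wz_false (N : ℕ) (k : ℤ) (a b : Bool) :
    WZ (N+1) k a b false = WZ N k true a b + WZ N k false a b := by
  unfold WZ
  split_ifs with h
  · rw [wf_false_eq]; push_cast; ring
  · ring

lemma wz_true (N : ℕ) (k : ℤ) (a b : Bool) :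
    WZ (N+1) k a b true = WZ N (k-1) false a b := by
  unfold WZ
  by_cases h1 : 1 ≤ k
  · rw [if_pos (by omega), if_pos (by omega)]
    have hk : k.toNat = (k-1).toNat + 1 := by omega
    rw [hk]
    rfl
  · by_cases h0 : k = 0
    · subst h0
      rw [if_pos le_rfl, if_neg (by omega)]
      rfl
    · rw [if_neg (by omega), if_neg (by omega)]

lemma wz_ofNat_sub (M : ℕ) (k' i : ℕ) (a b c : Bool) :
    WZ M ((k' : ℤ) - (i : ℤ)) a b c = if i ≤ k' then ((Wf M (k' - i) a b c : ℕ) : ℤ) else 0 := by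
  unfold WZ
  by_cases h : i ≤ k'
  · rw [if_pos (by omega), if_pos h]
    congr 2
    omega
  · rw [if_neg (by omega), if_neg h]

lemma wf_vanish : ∀ N k (a b c : Bool), N < k → Wf N k a b c = 0 := by
  intro N
  induction N with
  | zero => intro k a b c h; simp [Wf]; omega
  | succ N ih =>
    intro k a b c h
    cases c with
    | false =>
      rw [wf_false_eq, ih k true a b (by omega), ih k false a b (by omega)]
    | true =>
      cases k with
      | zero => rfl
      | succ k =>
        show Wf N k false a b = 0
        exact ih k false a b (by omega)

def IdentP (N : ℕ) : Prop := ∀ (k : ℤ) (a b c : Bool),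
  WZ N k a b c + WZ (N-3) (k-1) a b c + WZ (N-7) (k-3) a b c + WZ (N-8) (k-4) a b c
  = WZ (N-1) k a b c + WZ (N-2) (k-1) a b c + WZ (N-4) (k-1) a b c + WZ (N-5) (k-2) a b c
    + WZ (N-6) (k-3) a b c

lemma ident_base : IdentP 8 := by
  intro k a b c
  by_cases hk : 0 ≤ k
  · lift k to ℕ using hk
    show WZ 8 ((k:ℤ) - (0:ℕ)) a b c + WZ 5 ((k:ℤ)-(1:ℕ)) a b c + WZ 1 ((k:ℤ)-(3:ℕ)) a b c
        + WZ 0 ((k:ℤ)-(4:ℕ)) a b c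
      = WZ 7 ((k:ℤ)-(0:ℕ)) a b c + WZ 6 ((k:ℤ)-(1:ℕ)) a b c + WZ 4 ((k:ℤ)-(1:ℕ)) a b c
        + WZ 3 ((k:ℤ)-(2:ℕ)) a b c + WZ 2 ((k:ℤ)-(3:ℕ)) a b c
    rw [wz_ofNat_sub, wz_ofNat_sub, wz_ofNat_sub, wz_ofNat_sub, wz_ofNat_sub, wz_ofNat_sub,
      wz_ofNat_sub, wz_ofNat_sub, wz_ofNat_sub]
    by_cases hk9 : k ≤ 8
    · have key : ∀ k' : ℕ, k' ≤ 8 → ∀ a b c : Bool,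
        ((if 0 ≤ k' then Wf 8 (k' - 0) a b c else 0) + (if 1 ≤ k' then Wf 5 (k'-1) a b c else 0)
          + (if 3 ≤ k' then Wf 1 (k'-3) a b c else 0) + (if 4 ≤ k' then Wf 0 (k'-4) a b c else 0)
        = (if 0 ≤ k' then Wf 7 (k' - 0) a b c else 0) + (if 1 ≤ k' then Wf 6 (k'-1) a b c else 0)
          + (if 1 ≤ k' then Wf 4 (k'-1) a b c else 0) + (if 2 ≤ k' then Wf 3 (k'-2) a b c else 0)
          + (if 3 ≤ k' then Wf 2 (k'-3) a b c else 0)) := by decide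
      exact_mod_cast key k hk9 a b c
    · have hz : ∀ M i : ℕ, M + i < k → (if i ≤ k then ((Wf M (k - i) a b c : ℕ) : ℤ) else 0) = 0 := by
        intro M i hMi
        rw [if_pos (by omega), wf_vanish M (k - i) a b c (by omega)]
        rfl
      rw [hz 8 0 (by omega), hz 5 1 (by omega), hz 1 3 (by omega), hz 0 4 (by omega),
        hz 7 0 (by omega), hz 6 1 (by omega), hz 4 1 (by omega), hz 3 2 (by omega),
        hz 2 3 (by omega)]
      ring
  · have hz : ∀ M : ℕ, ∀ j : ℤ, j ≤ k → WZ M j a b c = 0 := by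
      intro M j hj
      unfold WZ
      rw [if_neg (by omega)]
    rw [hz 8 k le_rfl, hz 5 (k-1) (by omega), hz 1 (k-3) (by omega), hz 0 (k-4) (by omega),
      hz 7 k le_rfl, hz 6 (k-1) (by omega), hz 4 (k-1) (by omega), hz 3 (k-2) (by omega),
      hz 2 (k-3) (by omega)]
    ring

lemma ident_all : ∀ N, 8 ≤ N → IdentP N := by
  intro N
  induction N with
  | zero => intro h; omega
  | succ N ih =>
    intro h
    rcases Nat.lt_or_ge N 8 with h8 | h8
    · have : N + 1 = 8 := by omega
      rw [this]
      exact ident_base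
    · have IH := ih h8
      intro k a b c
      have e1 : N + 1 - 1 = (N - 1) + 1 := by omega
      have e2 : N + 1 - 2 = (N - 2) + 1 := by omega
      have e3 : N + 1 - 3 = (N - 3) + 1 := by omega
      have e4 : N + 1 - 4 = (N - 4) + 1 := by omega
      have e5 : N + 1 - 5 = (N - 5) + 1 := by omega
      have e6 : N + 1 - 6 = (N - 6) + 1 := by omega
      have e7 : N + 1 - 7 = (N - 7) + 1 := by omega
      have e8 : N + 1 - 8 = (N - 8) + 1 := by omega
      rw [e1, e2, e3, e4, e5, e6, e7, e8]
      cases c with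
      | false =>
        rw [wz_false, wz_false, wz_false, wz_false, wz_false, wz_false, wz_false, wz_false,
          wz_false]
        have h1 := IH k true a b
        have h2 := IH k false a b
        linarith [h1, h2]
      | true =>
        rw [wz_true, wz_true, wz_true, wz_true, wz_true, wz_true, wz_true, wz_true, wz_true]
        have h1 := IH (k-1) false a b
        have e9 : (k:ℤ) - 3 - 1 = k - 1 - 3 := by ring
        have e10 : (k:ℤ) - 4 - 1 = k - 1 - 4 := by ring
        have e11 : (k:ℤ) - 2 - 1 = k - 1 - 2 := by ring
        rw [e9, e10, e11]
        linarith [h1]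

def Pat' (N k : ℕ) (a b c : Bool) : ℕ :=
  (((Finset.Icc 1 N).powersetCard k).filter
    (fun S => (∀ x ∈ S, x + 3 ∉ S) ∧ ((N-2) ∈ S ↔ a = true) ∧ ((N-1) ∈ S ↔ b = true)
       ∧ (N ∈ S ↔ c = true))).card

lemma pat_succ_false (N k : ℕ) (a b : Bool) :
    Pat' (N+1) k a b false = Pat' N k true a b + Pat' N k false a b := by
  classical
  unfold Pat'
  rw [← Finset.card_union_of_disjoint]
  · congr 1
    ext S
    simp only [Finset.mem_union, Finset.mem_filter, Finset.mem_powersetCard]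
    have h2 : N + 1 - 2 = N - 1 := by omega
    have h1 : N + 1 - 1 = N := by omega
    rw [h2, h1]
    constructor
    · rintro ⟨⟨hsub, hcard⟩, hnd, ha, hb, hc⟩
      simp only [Bool.false_eq_true, iff_false] at hc
      have hsub' : S ⊆ Finset.Icc 1 N := by
        intro x hx
        have hx' := hsub hx
        simp only [Finset.mem_Icc] at hx' ⊢
        have : x ≠ N + 1 := fun h => hc (h ▸ hx)
        omega
      by_cases hN2 : (N - 2) ∈ S
      · left
        exact ⟨⟨hsub', hcard⟩, hnd, by simp [hN2], ha, hb⟩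
      · right
        exact ⟨⟨hsub', hcard⟩, hnd, by simp [hN2], ha, hb⟩
    · rintro (⟨⟨hsub, hcard⟩, hnd, _, ha, hb⟩ | ⟨⟨hsub, hcard⟩, hnd, _, ha, hb⟩) <;>
      · have hsub' : S ⊆ Finset.Icc 1 (N+1) := hsub.trans (by
          intro x hx; simp only [Finset.mem_Icc] at hx ⊢; omega)
        have hN1 : N + 1 ∉ S := by
          intro h
          have := hsub h
          simp only [Finset.mem_Icc] at this; omega
        exact ⟨⟨hsub', hcard⟩, hnd, ha, hb, by simp [hN1]⟩
  · rw [Finset.disjoint_left]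
    intro S hS hS'
    simp only [Finset.mem_filter] at hS hS'
    have h1 := hS.2.2.1
    have h2 := hS'.2.2.1
    simp_all

lemma pat_succ_true_zero (N : ℕ) (a b : Bool) : Pat' (N+1) 0 a b true = 0 := by
  classical
  rw [Pat', Finset.card_eq_zero]
  ext S
  simp only [Finset.mem_filter, Finset.mem_powersetCard, Finset.notMem_empty, iff_false]
  rintro ⟨⟨_, hcard⟩, _, _, _, hc⟩
  rw [Finset.card_eq_zero] at hcard
  subst hcard
  simp at hc

lemma pat_succ_true (N k : ℕ) (a b : Bool) :
    Pat' (N+1) (k+1) a b true = Pat' N k false a b := by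
  classical
  unfold Pat'
  refine Finset.card_bij' (fun S _ => S.erase (N+1)) (fun T _ => insert (N+1) T)
    ?hi ?hj ?li ?ri
  case hi =>
    intro S hS
    simp only [Finset.mem_filter, Finset.mem_powersetCard] at hS ⊢
    obtain ⟨⟨hsub, hcard⟩, hnd, ha, hb, hc⟩ := hS
    have h2 : N + 1 - 2 = N - 1 := by omega
    have h1 : N + 1 - 1 = N := by omega
    rw [h2] at ha
    rw [h1] at hb
    have hNin : N + 1 ∈ S := hc.mpr trivial
    have hN2 : N - 2 ∉ S := by
      intro h
      by_cases hN : 2 ≤ N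
      · have heq : N - 2 + 3 = N + 1 := by omega
        have h3 : N - 2 + 3 ∈ S := by rw [heq]; exact hNin
        exact hnd _ h h3
      · have := hsub h
        simp only [Finset.mem_Icc] at this
        omega
    refine ⟨⟨?_, ?_⟩, ?_, ?_, ?_, ?_⟩
    · intro x hx
      have hxS := Finset.mem_of_mem_erase hx
      have hxne := Finset.ne_of_mem_erase hx
      have := hsub hxS
      simp only [Finset.mem_Icc] at this ⊢
      omega
    · simp [Finset.card_erase_of_mem hNin, hcard]
    · intro x hx
      exact fun h => hnd x (Finset.mem_of_mem_erase hx) (Finset.mem_of_mem_erase h)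
    · simp only [Bool.false_eq_true, iff_false]
      intro h
      exact hN2 (Finset.mem_of_mem_erase h)
    · rw [Finset.mem_erase]
      constructor
      · rintro ⟨_, h⟩; exact ha.mp h
      · intro h; exact ⟨by omega, ha.mpr h⟩
    · rw [Finset.mem_erase]
      constructor
      · rintro ⟨_, h⟩; exact hb.mp h
      · intro h; exact ⟨by omega, hb.mpr h⟩
  case hj =>
    intro T hT
    simp only [Finset.mem_filter, Finset.mem_powersetCard] at hT ⊢
    obtain ⟨⟨hsub, hcard⟩, hnd, ha, hb, hc⟩ := hT
    simp only [Bool.false_eq_true, iff_false] at ha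
    have hNnotin : N + 1 ∉ T := by
      intro h; have := hsub h; simp only [Finset.mem_Icc] at this; omega
    have h2 : N + 1 - 2 = N - 1 := by omega
    have h1 : N + 1 - 1 = N := by omega
    rw [h2, h1]
    refine ⟨⟨?_, ?_⟩, ?_, ?_, ?_, ?_⟩
    · intro x hx
      rw [Finset.mem_insert] at hx
      rcases hx with rfl | hx
      · simp
      · have := hsub hx; simp only [Finset.mem_Icc] at this ⊢; omega
    · rw [Finset.card_insert_of_notMem hNnotin, hcard]
    · intro x hx hx3
      rw [Finset.mem_insert] at hx hx3
      rcases hx with rfl | hx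
      · rcases hx3 with h | h
        · omega
        · have := hsub h; simp only [Finset.mem_Icc] at this; omega
      · rcases hx3 with h | h
        · have hN2 : 2 ≤ N := by
            have := hsub hx; simp only [Finset.mem_Icc] at this; omega
          have hx2 : x = N - 2 := by omega
          exact ha (hx2 ▸ hx)
        · exact hnd x hx h
    · rw [Finset.mem_insert]
      constructor
      · rintro (h | h)
        · exfalso; omega
        · exact hb.mp h
      · intro h; right; exact hb.mpr h
    · rw [Finset.mem_insert]
      constructor
      · rintro (h | h)
        · exfalso; omega
        · exact hc.mp h
      · intro h; right; exact hc.mpr h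
    · simp
  case li =>
    intro S hS
    simp only [Finset.mem_filter, Finset.mem_powersetCard] at hS
    exact Finset.insert_erase (hS.2.2.2.2.mpr (by simp))
  case ri =>
    intro T hT
    simp only [Finset.mem_filter, Finset.mem_powersetCard] at hT
    have hNnotin : N + 1 ∉ T := by
      intro h; have := hT.1.1 h; simp only [Finset.mem_Icc] at this; omega
    exact Finset.erase_insert hNnotin
lemma pat_zero (k : ℕ) (a b c : Bool) : Pat' 0 k a b c = Wf 0 k a b c := by
  classical
  have hIcc : Finset.Icc 1 0 = (∅ : Finset ℕ) := by simp
  cases k with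
  | zero =>
    rw [Pat', hIcc]
    rw [Finset.powersetCard_zero]
    cases a <;> cases b <;> cases c <;> simp [Wf, Finset.filter_singleton]
  | succ k =>
    rw [Pat', hIcc]
    have : (∅ : Finset ℕ).powersetCard (k+1) = ∅ := by
      ext S
      simp only [Finset.mem_powersetCard, Finset.subset_empty, Finset.notMem_empty, iff_false]
      rintro ⟨rfl, h⟩
      simp at h
    rw [this]
    simp [Wf]

lemma pat_eq_wf : ∀ N k (a b c : Bool), Pat' N k a b c = Wf N k a b c := by
  intro N
  induction N with
  | zero => exact pat_zero
  | succ N ih =>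
    intro k a b c
    cases c with
    | false => rw [pat_succ_false, wf_false_eq, ih, ih]
    | true =>
      cases k with
      | zero => rw [pat_succ_true_zero]; rfl
      | succ k => rw [pat_succ_true, ih]; rfl

lemma cm_eq (N k : ℕ) :
    Cm 3 N k = ∑ t : Bool × Bool × Bool, Wf N k t.1 t.2.1 t.2.2 := by
  classical
  have H : ((((Finset.Icc 1 N).powersetCard k).filter (fun S => ∀ x ∈ S, x + 3 ∉ S)).card)
      = ∑ t : Bool × Bool × Bool,
        ((((Finset.Icc 1 N).powersetCard k).filter (fun S => ∀ x ∈ S, x + 3 ∉ S)).filter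
          (fun S => (decide ((N-2) ∈ S), decide ((N-1) ∈ S), decide (N ∈ S)) = t)).card :=
    Finset.card_eq_sum_card_fiberwise (fun x _ => Finset.mem_univ _)
  rw [Cm, H]
  refine Finset.sum_congr rfl (fun t _ => ?_)
  obtain ⟨a, b, c⟩ := t
  rw [← pat_eq_wf, Finset.filter_filter, Pat']
  congr 1
  apply Finset.filter_congr
  intro S _
  simp only [Prod.mk.injEq, decide_eq_true_eq]
  constructor
  · rintro ⟨h1, h2, h3, h4⟩
    refine ⟨h1, ?_, ?_, ?_⟩ <;> simp [← h2, ← h3, ← h4]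
  · rintro ⟨h1, h2, h3, h4⟩
    refine ⟨h1, ?_, ?_, ?_⟩
    · cases a <;> simp_all
    · cases b <;> simp_all
    · cases c <;> simp_all

def CZ (N : ℕ) (k : ℤ) : ℤ := if 0 ≤ k then (Cm 3 N k.toNat : ℤ) else 0

lemma cz_eq_sum (N : ℕ) (k : ℤ) :
    CZ N k = ∑ t : Bool × Bool × Bool, WZ N k t.1 t.2.1 t.2.2 := by
  unfold CZ WZ
  split_ifs with h
  · rw [cm_eq, Nat.cast_sum]
  · simp

lemma cz_ident (N : ℕ) (hN : 8 ≤ N) (k : ℤ) :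
    CZ N k + CZ (N-3) (k-1) + CZ (N-7) (k-3) + CZ (N-8) (k-4)
    = CZ (N-1) k + CZ (N-2) (k-1) + CZ (N-4) (k-1) + CZ (N-5) (k-2) + CZ (N-6) (k-3) := by
  have hI := ident_all N hN
  rw [cz_eq_sum, cz_eq_sum, cz_eq_sum, cz_eq_sum, cz_eq_sum, cz_eq_sum, cz_eq_sum, cz_eq_sum,
    cz_eq_sum]
  rw [← Finset.sum_add_distrib, ← Finset.sum_add_distrib, ← Finset.sum_add_distrib,
    ← Finset.sum_add_distrib, ← Finset.sum_add_distrib, ← Finset.sum_add_distrib,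
    ← Finset.sum_add_distrib]
  exact Finset.sum_congr rfl (fun t _ => hI k t.1 t.2.1 t.2.2)

lemma cm_vanish (N k : ℕ) (h : N + 4 ≤ 2 * k) : Cm 3 N k = 0 := by
  classical
  rw [Cm, Finset.card_eq_zero, Finset.eq_empty_iff_forall_notMem]
  intro S hS
  rw [Finset.mem_filter, Finset.mem_powersetCard] at hS
  obtain ⟨⟨hsub, hcard⟩, hnd⟩ := hS
  have hinj : Function.Injective (· + 3 : ℕ → ℕ) := add_left_injective 3
  have himg : (S.image (· + 3)).card = k := by rw [Finset.card_image_of_injective _ hinj, hcard]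
  have hdisj : Disjoint S (S.image (· + 3)) := by
    rw [Finset.disjoint_left]
    intro x hx hximg
    rw [Finset.mem_image] at hximg
    obtain ⟨y, hy, hyx⟩ := hximg
    exact hnd y hy (by rw [hyx]; exact hx)
  have hunion : S ∪ S.image (· + 3) ⊆ Finset.Icc 1 (N + 3) := by
    intro x hx
    rw [Finset.mem_union] at hx
    rcases hx with hx | hx
    · have := hsub hx; simp only [Finset.mem_Icc] at this ⊢; omega
    · rw [Finset.mem_image] at hx
      obtain ⟨y, hy, hyx⟩ := hx
      have := hsub hy
      simp only [Finset.mem_Icc] at this ⊢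
      omega
  have hle := Finset.card_le_card hunion
  rw [Finset.card_union_of_disjoint hdisj, hcard, himg, Nat.card_Icc] at hle
  omega

lemma b3_ofNat (m : ℕ) :
    B3 (m : ℤ) = ∑ k ∈ Finset.range (m+1), CZ (m + k - 3) (k : ℤ) := by
  rw [B3, if_neg (by omega)]
  rw [Int.toNat_natCast]
  refine Finset.sum_congr rfl (fun k _ => ?_)
  rw [CZ, if_pos (by omega), Int.toNat_natCast]

lemma shift_sum (m j i : ℕ) (hm : 11 ≤ m) (hij : i ≤ j) (hj : j ≤ 4) :
    ∑ k ∈ Finset.range (m+1), CZ (m + k - (3 + j + i)) ((k:ℤ) - (i:ℤ))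
      = B3 ((m - j : ℕ) : ℤ) := by
  rw [b3_ofNat]
  rw [Finset.range_eq_Ico, ← Finset.sum_Ico_consecutive _ (by omega : 0 ≤ i) (by omega : i ≤ m+1)]
  have hz1 : ∑ k ∈ Finset.Ico 0 i, CZ (m + k - (3 + j + i)) ((k:ℤ) - (i:ℤ)) = 0 := by
    apply Finset.sum_eq_zero
    intro k hk
    rw [Finset.mem_Ico] at hk
    rw [CZ, if_neg (by omega)]
  rw [hz1, zero_add, Finset.sum_Ico_eq_sum_range]
  have hstep : ∀ k ∈ Finset.range (m + 1 - i),
      CZ (m + (i + k) - (3 + j + i)) (((i + k : ℕ):ℤ) - (i:ℤ)) = CZ ((m - j) + k - 3) ((k:ℕ):ℤ) := by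
    intro k _
    congr 1
    · omega
    · push_cast; ring
  rw [Finset.sum_congr rfl hstep]
  rw [Finset.range_eq_Ico,
    ← Finset.sum_Ico_consecutive _ (by omega : 0 ≤ (m - j) + 1) (by omega : (m - j) + 1 ≤ m + 1 - i)]
  have hz2 : ∑ k ∈ Finset.Ico ((m - j) + 1) (m + 1 - i), CZ ((m - j) + k - 3) ((k:ℕ):ℤ) = 0 := by
    apply Finset.sum_eq_zero
    intro k hk
    rw [Finset.mem_Ico] at hk
    rw [CZ, if_pos (by omega), Int.toNat_natCast, cm_vanish _ _ (by omega)]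
    rfl
  rw [hz2, add_zero, Finset.range_eq_Ico]

lemma main_big (m : ℕ) (hm : 11 ≤ m) :
    B3 (m:ℤ) + B3 ((m-2:ℕ):ℤ) + 2 * B3 ((m-4:ℕ):ℤ)
      = 2 * B3 ((m-1:ℕ):ℤ) + 3 * B3 ((m-3:ℕ):ℤ) := by
  have key : (∑ k ∈ Finset.range (m+1), CZ (m + k - 3) ((k:ℤ)))
      + (∑ k ∈ Finset.range (m+1), CZ (m + k - (3+2+1)) ((k:ℤ) - (1:ℕ)))
      + (∑ k ∈ Finset.range (m+1), CZ (m + k - (3+4+3)) ((k:ℤ) - (3:ℕ)))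
      + (∑ k ∈ Finset.range (m+1), CZ (m + k - (3+4+4)) ((k:ℤ) - (4:ℕ)))
      = (∑ k ∈ Finset.range (m+1), CZ (m + k - (3+1+0)) ((k:ℤ) - (0:ℕ)))
      + (∑ k ∈ Finset.range (m+1), CZ (m + k - (3+1+1)) ((k:ℤ) - (1:ℕ)))
      + (∑ k ∈ Finset.range (m+1), CZ (m + k - (3+3+1)) ((k:ℤ) - (1:ℕ)))
      + (∑ k ∈ Finset.range (m+1), CZ (m + k - (3+3+2)) ((k:ℤ) - (2:ℕ)))
      + (∑ k ∈ Finset.range (m+1), CZ (m + k - (3+3+3)) ((k:ℤ) - (3:ℕ))) := by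
    rw [← Finset.sum_add_distrib, ← Finset.sum_add_distrib, ← Finset.sum_add_distrib,
      ← Finset.sum_add_distrib, ← Finset.sum_add_distrib, ← Finset.sum_add_distrib,
      ← Finset.sum_add_distrib]
    refine Finset.sum_congr rfl (fun k hk => ?_)
    rw [Finset.mem_range] at hk
    have h := cz_ident (m + k - 3) (by omega) ((k:ℤ))
    have a1 : m + k - 3 - 3 = m + k - (3+2+1) := by omega
    have a2 : m + k - 3 - 7 = m + k - (3+4+3) := by omega
    have a3 : m + k - 3 - 8 = m + k - (3+4+4) := by omega
    have a4 : m + k - 3 - 1 = m + k - (3+1+0) := by omega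
    have a5 : m + k - 3 - 2 = m + k - (3+1+1) := by omega
    have a6 : m + k - 3 - 4 = m + k - (3+3+1) := by omega
    have a7 : m + k - 3 - 5 = m + k - (3+3+2) := by omega
    have a8 : m + k - 3 - 6 = m + k - (3+3+3) := by omega
    rw [a1, a2, a3, a4, a5, a6, a7, a8] at h
    have c1 : ((1:ℕ):ℤ) = 1 := by norm_num
    have c2 : ((2:ℕ):ℤ) = 2 := by norm_num
    have c3 : ((3:ℕ):ℤ) = 3 := by norm_num
    have c4 : ((4:ℕ):ℤ) = 4 := by norm_num
    have c0 : ((0:ℕ):ℤ) = 0 := by norm_num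
    rw [c0, c1, c2, c3, c4, sub_zero]
    exact h
  rw [shift_sum m 2 1 hm (by omega) (by omega), shift_sum m 4 3 hm (by omega) (by omega),
    shift_sum m 4 4 hm (by omega) (by omega), shift_sum m 1 0 hm (by omega) (by omega),
    shift_sum m 1 1 hm (by omega) (by omega), shift_sum m 3 1 hm (by omega) (by omega),
    shift_sum m 3 2 hm (by omega) (by omega), shift_sum m 3 3 hm (by omega) (by omega)] at key
  rw [← b3_ofNat] at key
  linarith [key]

lemma b3_val (m v : ℕ)
    (h : (∑ k ∈ Finset.range (m+1), ∑ t : Bool × Bool × Bool, Wf (m+k-3) k t.1 t.2.1 t.2.2) = v) :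
    B3 (m : ℤ) = v := by
  rw [B3, if_neg (by omega), Int.toNat_natCast, ← h, Nat.cast_sum]
  refine Finset.sum_congr rfl (fun k _ => ?_)
  rw [cm_eq, Nat.cast_sum]

lemma b3_neg {i : ℤ} (h : i < 0) : B3 i = 0 := by rw [B3, if_pos h]

lemma q0 : B3 (0:ℤ) = 1 := by have h := b3_val 0 1 (by decide); exact_mod_cast h
lemma q1 : B3 (1:ℤ) = 1 := by have h := b3_val 1 1 (by decide); exact_mod_cast h
lemma q2 : B3 (2:ℤ) = 1 := by have h := b3_val 2 1 (by decide); exact_mod_cast h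
lemma q3 : B3 (3:ℤ) = 4 := by have h := b3_val 3 4 (by decide); exact_mod_cast h
lemma q4 : B3 (4:ℤ) = 8 := by have h := b3_val 4 8 (by decide); exact_mod_cast h
lemma q5 : B3 (5:ℤ) = 13 := by have h := b3_val 5 13 (by decide); exact_mod_cast h
lemma q6 : B3 (6:ℤ) = 28 := by have h := b3_val 6 28 (by decide); exact_mod_cast h
lemma q7 : B3 (7:ℤ) = 59 := by have h := b3_val 7 59 (by decide); exact_mod_cast h
lemma q8 : B3 (8:ℤ) = 113 := by have h := b3_val 8 113 (by decide); exact_mod_cast h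
lemma q9 : B3 (9:ℤ) = 225 := by have h := b3_val 9 225 (by decide); exact_mod_cast h
lemma q10 : B3 (10:ℤ) = 458 := by have h := b3_val 10 458 (by decide); exact_mod_cast h


/-- For `n ≥ 2`, `B_n = 2B_{n-1} - B_{n-2} + 3B_{n-3} - 2B_{n-4}`. -/
theorem stmt_17 (n : ℤ) (hn : 2 ≤ n) :
    B3 n = 2 * B3 (n - 1) - B3 (n - 2) + 3 * B3 (n - 3) - 2 * B3 (n - 4) := by
  rcases Nat.lt_or_ge n.toNat 11 with h | h
  · have hn10 : n ≤ 10 := by omega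
    interval_cases n
    · norm_num [q2, q1, q0, b3_neg (by norm_num : (-1:ℤ) < 0), b3_neg (by norm_num : (-2:ℤ) < 0)]
    · norm_num [q3, q2, q1, q0, b3_neg (by norm_num : (-1:ℤ) < 0)]
    · norm_num [q4, q3, q2, q1, q0]
    · norm_num [q5, q4, q3, q2, q1]
    · norm_num [q6, q5, q4, q3, q2]
    · norm_num [q7, q6, q5, q4, q3]
    · norm_num [q8, q7, q6, q5, q4]
    · norm_num [q9, q8, q7, q6, q5]
    · norm_num [q10, q9, q8, q7, q6]
  · set m := n.toNat with hm
    have hn' : n = (m : ℤ) := by omega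
    have h1 : n - 1 = ((m - 1 : ℕ) : ℤ) := by omega
    have h2 : n - 2 = ((m - 2 : ℕ) : ℤ) := by omega
    have h3 : n - 3 = ((m - 3 : ℕ) : ℤ) := by omega
    have h4 : n - 4 = ((m - 4 : ℕ) : ℤ) := by omega
    rw [h1, h2, h3, h4, hn']
    have := main_big m h
    linarith [this]
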